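/- Let U ⊆ ℝ^N be an open set, let Γ^α_{σβ} : U → ℝ be twice differentiable connection coefficients, and let F ∈ Matrix (Fin N) (Fin N) ℝ be a constant matrix. Suppose F is covariantly constant with respect to Γ, i.e. ∑_λ Γ^α_{σλ}(z) F^λ_β = ∑_ν Γ^ν_{σβ}(z) F^α_ν for all z ∈ U and all indices. Then the curvature tensor of Γ is pure with respect to one upper and one lower index: ∑_λ R^λ_{αβγ}(z) F^δ_λ = ∑_λ R^δ_{αβλ}(z) F^λ_γ for all z ∈ U and all indices α,β,γ,δ (equivalently, each curvature operator R(∂_α,∂_β) commutes with F). -/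

import Mathlib

/-- The curvature tensor of connection coefficients `Γ`:
`R^δ_{αβγ} = ∂_α Γ^δ_{βγ} − ∂_β Γ^δ_{αγ} + ∑_λ (Γ^δ_{αλ} Γ^λ_{βγ} − Γ^δ_{βλ} Γ^λ_{αγ})`,
where `Γ z δ β γ = Γ^δ_{βγ}(z)`. -/
noncomputable def curvature {N : ℕ} (Γ : (Fin N → ℝ) → Fin N → Fin N → Fin N → ℝ)
    (z : Fin N → ℝ) (δ α β γ : Fin N) : ℝ :=
  fderiv ℝ (fun w => Γ w δ β γ) z (Pi.single α 1)
    - fderiv ℝ (fun w => Γ w δ α γ) z (Pi.single β 1)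
    + ∑ μ, (Γ z δ α μ * Γ z μ β γ - Γ z δ β μ * Γ z μ α γ)

private lemma fderiv_sum_mul {N : ℕ} {g : Fin N → (Fin N → ℝ) → ℝ} {c : Fin N → ℝ}
    {z v : Fin N → ℝ} (hg : ∀ μ, DifferentiableAt ℝ (g μ) z) :
    fderiv ℝ (fun w => ∑ μ, g μ w * c μ) z v = ∑ μ, fderiv ℝ (g μ) z v * c μ := by
  have h : HasFDerivAt (fun w => ∑ μ, g μ w * c μ) (∑ μ, c μ • fderiv ℝ (g μ) z) z :=
    HasFDerivAt.fun_sum fun μ _ => ((hg μ).hasFDerivAt).mul_const (c μ)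
  rw [h.fderiv]
  simp [ContinuousLinearMap.sum_apply, mul_comm]

/-- If a constant (1,1)-tensor `F` is covariantly constant with
respect to twice differentiable connection coefficients `Γ`, then the curvature
tensor of `Γ` is pure with respect to one upper and one lower index:
`∑_λ R^λ_{αβγ} F^δ_λ = ∑_λ R^δ_{αβλ} F^λ_γ`. -/
theorem stmt_2 {N : ℕ} (U : Set (Fin N → ℝ)) (hUopen : IsOpen U)
    (Γ : (Fin N → ℝ) → Fin N → Fin N → Fin N → ℝ)   -- Γ z α σ β = Γ^α_{σβ}(z)
    (hΓ : ∀ δ β γ, ContDiffOn ℝ 2 (fun z => Γ z δ β γ) U)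
    (F : Matrix (Fin N) (Fin N) ℝ)                   -- F α β = F^α_β
    (hcov : ∀ z ∈ U, ∀ σ α β,
      ∑ μ, Γ z α σ μ * F μ β = ∑ ν, Γ z ν σ β * F α ν) :
    ∀ z ∈ U, ∀ α β γ δ,
      ∑ μ, curvature Γ z μ α β γ * F δ μ = ∑ μ, curvature Γ z δ α β μ * F μ γ := by
  intro z hz α β γ δ
  have hdiff : ∀ d b c, DifferentiableAt ℝ (fun w => Γ w d b c) z := fun d b c =>
    ((hΓ d b c).differentiableOn two_ne_zero).differentiableAt (hUopen.mem_nhds hz)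
  have key := hcov z hz
  -- quadratic part
  have hQ1 : ∀ a b, ∑ μ, (∑ l, Γ z μ a l * Γ z l b γ) * F δ μ
      = ∑ μ, (∑ l, Γ z δ a l * Γ z l b μ) * F μ γ := by
    intro a b
    calc ∑ μ, (∑ l, Γ z μ a l * Γ z l b γ) * F δ μ
        = ∑ l, (∑ μ, Γ z μ a l * F δ μ) * Γ z l b γ := by
          simp only [Finset.sum_mul]
          rw [Finset.sum_comm]
          exact Finset.sum_congr rfl fun l _ => Finset.sum_congr rfl fun μ _ => by ring
      _ = ∑ l, (∑ μ, Γ z δ a μ * F μ l) * Γ z l b γ := by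
          refine Finset.sum_congr rfl fun l _ => ?_
          rw [key a δ l]
      _ = ∑ μ, Γ z δ a μ * (∑ l, Γ z l b γ * F μ l) := by
          simp only [Finset.sum_mul, Finset.mul_sum]
          rw [Finset.sum_comm]
          exact Finset.sum_congr rfl fun μ _ => Finset.sum_congr rfl fun l _ => by ring
      _ = ∑ μ, Γ z δ a μ * (∑ l, Γ z μ b l * F l γ) := by
          refine Finset.sum_congr rfl fun μ _ => ?_
          rw [← key b μ γ]
      _ = ∑ μ, (∑ l, Γ z δ a l * Γ z l b μ) * F μ γ := by
          simp only [Finset.sum_mul, Finset.mul_sum]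
          rw [Finset.sum_comm]
          exact Finset.sum_congr rfl fun l _ => Finset.sum_congr rfl fun μ _ => by ring
  -- derivative part
  have hD : ∀ b c, fderiv ℝ (fun w => ∑ μ, Γ w μ b c * F δ μ) z
      = fderiv ℝ (fun w => ∑ μ, Γ w δ b μ * F μ c) z := by
    intro b c
    apply Filter.EventuallyEq.fderiv_eq
    filter_upwards [hUopen.mem_nhds hz] with w hw
    exact (hcov w hw b δ c).symm
  have hD1 : ∀ b c (v : Fin N → ℝ),
      ∑ μ, fderiv ℝ (fun w => Γ w μ b c) z v * F δ μ
        = ∑ μ, fderiv ℝ (fun w => Γ w δ b μ) z v * F μ c :=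
    fun b c v => by
      rw [← fderiv_sum_mul (fun μ => hdiff μ b c), hD b c,
        fderiv_sum_mul (fun μ => hdiff δ b μ)]
  simp only [curvature, sub_mul, add_mul, Finset.sum_add_distrib, Finset.sum_sub_distrib]
  rw [hD1 β γ, hD1 α γ, hQ1 α β, hQ1 β α]
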